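/- Let B be a skew-symmetrizable n×n integer matrix with n ≥ 3 whose diagram is connected. Then B has finite mutation class if and only if every matrix B' mutation-equivalent to B satisfies |b'_ij · b'_ji| ≤ 4 for all i, j (i.e., no diagram in the mutation class contains an edge of weight greater than 4). -/

import Mathlib

open Matrix

/-- Matrix mutation in direction `k`. -/
def mutate {n : ℕ} (B : Matrix (Fin n) (Fin n) ℤ) (k : Fin n) : Matrix (Fin n) (Fin n) ℤ :=
  Matrix.of fun i j =>
    if i = k ∨ j = k then -B i j
    else B i j + (|B i k| * B k j + B i k * |B k j|) / 2

/-- The mutation class of `B`: all matrices obtained from `B` by finite sequences of mutations. -/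
def mutationClass {n : ℕ} (B : Matrix (Fin n) (Fin n) ℤ) : Set (Matrix (Fin n) (Fin n) ℤ) :=
  {B' | ∃ l : List (Fin n), B' = l.foldl mutate B}

/-- `B` is skew-symmetrizable: there are positive integers `d i` with `b_ij d_j = -(b_ji d_i)`. -/
def IsSkewSymmetrizable {n : ℕ} (B : Matrix (Fin n) (Fin n) ℤ) : Prop :=
  ∃ d : Fin n → ℤ, (∀ i, 0 < d i) ∧ ∀ i j, B i j * d j = -(B j i * d i)

namespace MutAux

variable {n : ℕ}

def Skew (d : Fin n → ℤ) (M : Matrix (Fin n) (Fin n) ℤ) : Prop :=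
  ∀ i j, M i j * d j = -(M j i * d i)

def Wt (M : Matrix (Fin n) (Fin n) ℤ) (a b : Fin n) : ℤ := |M a b * M b a|

lemma Wt_symm (M : Matrix (Fin n) (Fin n) ℤ) (a b : Fin n) : Wt M a b = Wt M b a := by
  unfold Wt; rw [mul_comm]

lemma mutate_apply (M : Matrix (Fin n) (Fin n) ℤ) (k i j : Fin n) :
    mutate M k i j = if i = k ∨ j = k then -M i j
      else M i j + (|M i k| * M k j + M i k * |M k j|) / 2 := rfl

lemma mutate_apply_ne {i j k : Fin n} (M : Matrix (Fin n) (Fin n) ℤ) (hi : i ≠ k) (hj : j ≠ k) :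
    mutate M k i j = M i j + (|M i k| * M k j + M i k * |M k j|) / 2 := by
  rw [mutate_apply, if_neg (by tauto)]

lemma mutate_apply_left (M : Matrix (Fin n) (Fin n) ℤ) (k j : Fin n) :
    mutate M k k j = -M k j := by rw [mutate_apply, if_pos (Or.inl rfl)]

lemma mutate_apply_right (M : Matrix (Fin n) (Fin n) ℤ) (k i : Fin n) :
    mutate M k i k = -M i k := by rw [mutate_apply, if_pos (Or.inr rfl)]

lemma half_pp {x y : ℤ} (hx : 0 < x) (hy : 0 < y) : (|x| * y + x * |y|) / 2 = x * y := by
  rw [abs_of_pos hx, abs_of_pos hy]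
  have h : x * y + x * y = 2 * (x * y) := by ring
  rw [h, Int.mul_ediv_cancel_left _ two_ne_zero]

lemma half_nn {x y : ℤ} (hx : x < 0) (hy : y < 0) : (|x| * y + x * |y|) / 2 = -(x * y) := by
  rw [abs_of_neg hx, abs_of_neg hy]
  have h : -x * y + x * -y = 2 * (-(x * y)) := by ring
  rw [h, Int.mul_ediv_cancel_left _ two_ne_zero]

lemma half_pm {x y : ℤ} (hx : 0 ≤ x) (hy : y ≤ 0) : (|x| * y + x * |y|) / 2 = 0 := by
  rw [abs_of_nonneg hx, abs_of_nonpos hy]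
  have h : x * y + x * -y = 0 := by ring
  rw [h]; simp

lemma half_mp {x y : ℤ} (hx : x ≤ 0) (hy : 0 ≤ y) : (|x| * y + x * |y|) / 2 = 0 := by
  rw [abs_of_nonpos hx, abs_of_nonneg hy]
  have h : -x * y + x * y = 0 := by ring
  rw [h]; simp

section SkewLemmas

variable {d : Fin n → ℤ} {M : Matrix (Fin n) (Fin n) ℤ}

lemma skew_zero (hd : ∀ i, 0 < d i) (h : Skew d M) {a b : Fin n} (hab : M a b = 0) :
    M b a = 0 := by
  have e := h a b
  rw [hab, zero_mul] at e
  have : M b a * d a = 0 := by linarith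
  rcases mul_eq_zero.mp this with h' | h'
  · exact h'
  · exact absurd h' (ne_of_gt (hd a))

lemma skew_neg_of_pos (hd : ∀ i, 0 < d i) (h : Skew d M) {a b : Fin n} (hab : 0 < M a b) :
    M b a < 0 := by
  have e := h a b
  have h1 : 0 < M a b * d b := mul_pos hab (hd b)
  have h2 : M b a * d a < 0 := by linarith
  by_contra hc
  push_neg at hc
  exact absurd h2 (not_lt.mpr (mul_nonneg hc (hd a).le))

lemma skew_pos_of_neg (hd : ∀ i, 0 < d i) (h : Skew d M) {a b : Fin n} (hab : M a b < 0) :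
    0 < M b a := by
  have e := h a b
  have h1 : M a b * d b < 0 := mul_neg_of_neg_of_pos hab (hd b)
  have h2 : 0 < M b a * d a := by linarith
  by_contra hc
  push_neg at hc
  exact absurd h2 (not_lt.mpr (mul_nonpos_of_nonpos_of_nonneg hc (hd a).le))

lemma skew_nonneg_of_nonpos (hd : ∀ i, 0 < d i) (h : Skew d M) {a b : Fin n} (hab : M a b ≤ 0) :
    0 ≤ M b a := by
  rcases lt_or_eq_of_le hab with h' | h'
  · exact (skew_pos_of_neg hd h h').le
  · rw [skew_zero hd h h']

lemma skew_nonpos_of_nonneg (hd : ∀ i, 0 < d i) (h : Skew d M) {a b : Fin n} (hab : 0 ≤ M a b) :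
    M b a ≤ 0 := by
  rcases lt_or_eq_of_le hab with h' | h'
  · exact (skew_neg_of_pos hd h h').le
  · rw [skew_zero hd h h'.symm]
  
lemma skew_diag (hd : ∀ i, 0 < d i) (h : Skew d M) (a : Fin n) : M a a = 0 := by
  have e := h a a
  have : M a a * d a = 0 := by linarith
  rcases mul_eq_zero.mp this with h' | h'
  · exact h'
  · exact absurd h' (ne_of_gt (hd a))

lemma Wt_pos_neg (h1 : 0 < M a b) (h2 : M b a < 0) : Wt M a b = M a b * -(M b a) := by
  unfold Wt
  rw [abs_of_neg (mul_neg_of_pos_of_neg h1 h2)]; ring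

lemma one_le_Wt (h1 : 0 < M a b) (h2 : M b a < 0) : 1 ≤ Wt M a b := by
  rw [Wt_pos_neg h1 h2]
  have ha : 1 ≤ M a b := h1
  have hb : 1 ≤ -(M b a) := by linarith
  nlinarith

end SkewLemmas



section SkewMutate

variable {n : ℕ} {d : Fin n → ℤ} {M : Matrix (Fin n) (Fin n) ℤ}

lemma skew_mutate (hd : ∀ i, 0 < d i) (h : Skew d M) (k : Fin n) :
    Skew d (mutate M k) := by
  intro i j
  by_cases hc : i = k ∨ j = k
  · have hc' : j = k ∨ i = k := by tauto
    rw [mutate_apply M k i j, if_pos hc, mutate_apply M k j i, if_pos hc']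
    linear_combination (-1 : ℤ) * h i j
  · push_neg at hc
    obtain ⟨hik, hjk⟩ := hc
    rw [mutate_apply_ne M hik hjk, mutate_apply_ne M hjk hik]
    have hik' := h i k
    have hkj' := h k j
    have main : M i k * M k j * d j = M j k * M k i * d i := by
      refine mul_left_cancel₀ (hd k).ne' ?_
      linear_combination (M k j * d j) * hik' + (-(M k i * d i)) * hkj'
    have key : (|M i k| * M k j + M i k * |M k j|) / 2 * d j
        = -((|M j k| * M k i + M j k * |M k i|) / 2 * d i) := by
      rcases lt_trichotomy (M i k) 0 with hx | hx | hx
      · have hki : 0 < M k i := skew_pos_of_neg hd h hx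
        rcases lt_trichotomy (M k j) 0 with hy | hy | hy
        · have hjk2 : 0 < M j k := skew_pos_of_neg hd h hy
          rw [half_nn hx hy, half_pp hjk2 hki]
          linear_combination -main
        · have hjk2 : M j k = 0 := skew_zero hd h hy
          rw [hy, hjk2]; simp
        · have hjk2 : M j k < 0 := skew_neg_of_pos hd h hy
          rw [half_mp hx.le hy.le, half_mp hjk2.le hki.le]; simp
      · have hki : M k i = 0 := skew_zero hd h hx
        rw [hx, hki]; simp
      · have hki : M k i < 0 := skew_neg_of_pos hd h hx
        rcases lt_trichotomy (M k j) 0 with hy | hy | hy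
        · have hjk2 : 0 < M j k := skew_pos_of_neg hd h hy
          rw [half_pm hx.le hy.le, half_pm hjk2.le hki.le]; simp
        · have hjk2 : M j k = 0 := skew_zero hd h hy
          rw [hy, hjk2]; simp
        · have hjk2 : M j k < 0 := skew_neg_of_pos hd h hy
          rw [half_pp hx hy, half_nn hjk2 hki]
          linear_combination main
    linear_combination h i j + key

end SkewMutate

section ClassLemmas

variable {n : ℕ} {d : Fin n → ℤ} {B M : Matrix (Fin n) (Fin n) ℤ}

lemma mem_self (B : Matrix (Fin n) (Fin n) ℤ) : B ∈ mutationClass B := ⟨[], rfl⟩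

lemma mem_mutate (h : M ∈ mutationClass B) (k : Fin n) : mutate M k ∈ mutationClass B := by
  obtain ⟨l, rfl⟩ := h
  exact ⟨l ++ [k], by simp [List.foldl_append]⟩

lemma skew_foldl (hd : ∀ i, 0 < d i) :
    ∀ (l : List (Fin n)) (M : Matrix (Fin n) (Fin n) ℤ), Skew d M → Skew d (l.foldl mutate M) := by
  intro l
  induction l with
  | nil => intro M h; exact h
  | cons k l ih => intro M h; exact ih (mutate M k) (skew_mutate hd h k)

lemma class_skew (hd : ∀ i, 0 < d i) (hB : Skew d B) (h : M ∈ mutationClass B) : Skew d M := by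
  obtain ⟨l, rfl⟩ := h
  exact skew_foldl hd l B hB

def Dg (M : Matrix (Fin n) (Fin n) ℤ) : SimpleGraph (Fin n) :=
  SimpleGraph.fromRel (fun a b => M a b ≠ 0)

lemma Dg_adj {M : Matrix (Fin n) (Fin n) ℤ} {a b : Fin n} :
    (Dg M).Adj a b ↔ a ≠ b ∧ (M a b ≠ 0 ∨ M b a ≠ 0) := by
  simp [Dg, SimpleGraph.fromRel_adj]

lemma pre_mono {V : Type*} {G G' : SimpleGraph V}
    (h : ∀ a b, G.Adj a b → G'.Reachable a b) (hG : G.Preconnected) : G'.Preconnected := by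
  intro a b
  obtain ⟨w⟩ := hG a b
  induction w with
  | nil => exact SimpleGraph.Reachable.refl _
  | cons hadj p ih => exact (h _ _ hadj).trans ih

lemma term_ne {M : Matrix (Fin n) (Fin n) ℤ} {a b k : Fin n} (hab : M a b ≠ 0)
    (h0 : M a b + (|M a k| * M k b + M a k * |M k b|) / 2 = 0) :
    M a k ≠ 0 ∧ M k b ≠ 0 := by
  constructor
  · intro hz; rw [hz] at h0; simp at h0; exact hab h0
  · intro hz; rw [hz] at h0; simp at h0; exact hab h0

lemma conn_mutate {M : Matrix (Fin n) (Fin n) ℤ} (h : (Dg M).Connected) (k : Fin n) :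
    (Dg (mutate M k)).Connected := by
  have hadj : ∀ a b, (Dg M).Adj a b → (Dg (mutate M k)).Reachable a b := by
    intro a b hab
    rw [Dg_adj] at hab
    obtain ⟨hne, hor⟩ := hab
    by_cases hk : a = k ∨ b = k
    · refine SimpleGraph.Adj.reachable ?_
      rw [Dg_adj]
      refine ⟨hne, ?_⟩
      rcases hk with rfl | rfl
      · rw [mutate_apply_left, mutate_apply_right]
        simpa using hor
      · rw [mutate_apply_right, mutate_apply_left]
        simpa using hor
    · push_neg at hk
      obtain ⟨hak, hbk⟩ := hk
      by_cases h2 : mutate M k a b ≠ 0 ∨ mutate M k b a ≠ 0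
      · exact SimpleGraph.Adj.reachable (Dg_adj.mpr ⟨hne, h2⟩)
      · push_neg at h2
        obtain ⟨hz1, hz2⟩ := h2
        rw [mutate_apply_ne M hak hbk] at hz1
        rw [mutate_apply_ne M hbk hak] at hz2
        have step : (M a k ≠ 0 ∨ M k a ≠ 0) ∧ (M k b ≠ 0 ∨ M b k ≠ 0) := by
          rcases hor with h' | h'
          · obtain ⟨s1, s2⟩ := term_ne h' hz1
            exact ⟨Or.inl s1, Or.inl s2⟩
          · obtain ⟨s1, s2⟩ := term_ne h' hz2
            exact ⟨Or.inr s2, Or.inr s1⟩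
        have r1 : (Dg (mutate M k)).Adj a k := by
          rw [Dg_adj, mutate_apply_right, mutate_apply_left]
          exact ⟨hak, by simpa using step.1⟩
        have r2 : (Dg (mutate M k)).Adj k b := by
          rw [Dg_adj, mutate_apply_left, mutate_apply_right]
          refine ⟨fun hh => hbk hh.symm, ?_⟩
          have := step.2
          simpa using (this.imp id id)
        exact r1.reachable.trans r2.reachable
  obtain ⟨hpre⟩ := h
  exact ⟨pre_mono hadj hpre⟩

lemma conn_foldl :
    ∀ (l : List (Fin n)) (M : Matrix (Fin n) (Fin n) ℤ), (Dg M).Connected →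
      (Dg (l.foldl mutate M)).Connected := by
  intro l
  induction l with
  | nil => intro M h; exact h
  | cons k l ih => intro M h; exact ih (mutate M k) (conn_mutate h k)

lemma class_conn (hB : (Dg B).Connected) (h : M ∈ mutationClass B) : (Dg M).Connected := by
  obtain ⟨l, rfl⟩ := h
  exact conn_foldl l B hB

end ClassLemmas

section Arith

lemma key_arith {a1 a2 c1 c2 e1 e2 : ℤ} (ha1 : 0 < a1) (ha2 : 0 < a2) (hc1 : 0 < c1)
    (hc2 : 0 < c2) (he1 : 0 < e1) (he2 : 0 < e2)
    (hS : a1 * c1 * e1 = a2 * c2 * e2)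
    (hw : 4 * (a1 * a2) < (e1 * e2) * (c1 * c2)) :
    a2 < c1 * e1 ∧ a1 < c2 * e2 ∧ a1 * a2 < (c1 * e1 - a2) * (c2 * e2 - a1) := by
  have hP : 0 < a1 * a2 := mul_pos ha1 ha2
  have hs1 : 0 < a1 * c1 * e1 := by positivity
  have hQR : 0 < (e1 * e2) * (c1 * c2) := by positivity
  have hsq : (a1 * c1 * e1) * (a1 * c1 * e1) = (a1 * a2) * ((e1 * e2) * (c1 * c2)) := by
    linear_combination (a1 * c1 * e1) * hS
  have hPs : a1 * a2 < a1 * c1 * e1 := by nlinarith [mul_pos hP hP]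
  have g1 : a2 < c1 * e1 := by
    have h' : a1 * a2 < a1 * (c1 * e1) := by linarith [hPs, (by ring : a1 * c1 * e1 = a1 * (c1 * e1))]
    exact lt_of_mul_lt_mul_left h' ha1.le
  have g2 : a1 < c2 * e2 := by
    have h'' : a2 * a1 < a2 * (c2 * e2) := by nlinarith [hPs, hS]
    exact lt_of_mul_lt_mul_left h'' ha2.le
  refine ⟨g1, g2, ?_⟩
  have h2s : 2 * (a1 * c1 * e1) < (e1 * e2) * (c1 * c2) := by
    nlinarith [hsq, mul_lt_mul_of_pos_right hw hQR, hs1, hQR]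
  have expand : (c1 * e1 - a2) * (c2 * e2 - a1)
      = (e1 * e2) * (c1 * c2) - 2 * (a1 * c1 * e1) + a1 * a2 := by
    linear_combination hS
  linarith

lemma minmax {Z X Y : ℤ} (h1 : 1 ≤ Z) (h2 : 1 ≤ X) (h3 : 1 ≤ Y) (hZX : Z ≤ X) (hZY : Z ≤ Y)
    (hmax : 5 ≤ Z ∨ 5 ≤ X ∨ 5 ≤ Y) : 4 * Z < X * Y := by
  rcases hmax with h | h | h <;> nlinarith

end Arith

section Core

variable {n : ℕ} {d : Fin n → ℤ} {M : Matrix (Fin n) (Fin n) ℤ}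

lemma core_pos (hd : ∀ i, 0 < d i) (h : Skew d M) {a b c : Fin n}
    (hab : a ≠ b) (hbc : b ≠ c) (hac : a ≠ c)
    (h1 : 0 < M a b) (h2 : 0 < M b c) (h3 : 0 ≤ M a c) :
    0 < mutate M b a c ∧ 0 < mutate M b c b ∧ 0 < mutate M b b a ∧
    Wt (mutate M b) b a = Wt M a b ∧ Wt (mutate M b) c b = Wt M b c ∧
    Wt M a c ≤ Wt (mutate M b) a c ∧ Wt M a b * Wt M b c ≤ Wt (mutate M b) a c := by
  have hba : M b a < 0 := skew_neg_of_pos hd h h1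
  have hcb : M c b < 0 := skew_neg_of_pos hd h h2
  have hca : M c a ≤ 0 := skew_nonpos_of_nonneg hd h h3
  have e_ac : mutate M b a c = M a c + M a b * M b c := by
    rw [mutate_apply_ne M hab hbc.symm, half_pp h1 h2]
  have e_ca : mutate M b c a = M c a + -(M c b * M b a) := by
    rw [mutate_apply_ne M hbc.symm hab, half_nn hcb hba]
  have hq : 0 < M c b * M b a := mul_pos_of_neg_of_neg hcb hba
  have hp : 0 < M a b * M b c := mul_pos h1 h2
  have g1 : 0 < mutate M b a c := by rw [e_ac]; linarith
  have g1' : mutate M b c a < 0 := by rw [e_ca]; linarith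
  refine ⟨g1, ?_, ?_, ?_, ?_, ?_, ?_⟩
  · rw [mutate_apply_right]; exact neg_pos.mpr hcb
  · rw [mutate_apply_left]; exact neg_pos.mpr hba
  · unfold Wt
    rw [mutate_apply_left, mutate_apply_right, neg_mul_neg, mul_comm]
  · unfold Wt
    rw [mutate_apply_right, mutate_apply_left, neg_mul_neg, mul_comm]
  · have w1 : Wt M a c = -(M a c * M c a) :=
      abs_of_nonpos (mul_nonpos_iff.mpr (Or.inl ⟨h3, hca⟩))
    have w2 : Wt (mutate M b) a c = -(mutate M b a c * mutate M b c a) :=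
      abs_of_nonpos (mul_nonpos_iff.mpr (Or.inl ⟨g1.le, g1'.le⟩))
    rw [w1, w2, e_ac, e_ca]
    nlinarith [mul_nonneg h3 hq.le, mul_nonneg hp.le (neg_nonneg.mpr hca), mul_pos hp hq]
  · have w2 : Wt (mutate M b) a c = -(mutate M b a c * mutate M b c a) :=
      abs_of_nonpos (mul_nonpos_iff.mpr (Or.inl ⟨g1.le, g1'.le⟩))
    rw [Wt_pos_neg h1 hba, Wt_pos_neg h2 hcb, w2, e_ac, e_ca]
    nlinarith [mul_nonneg h3 hq.le, mul_nonneg hp.le (neg_nonneg.mpr hca), mul_pos hp hq]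

lemma core_neg (hd : ∀ i, 0 < d i) (h : Skew d M) {i j k : Fin n}
    (hij : i ≠ j) (hjk : j ≠ k) (hik : i ≠ k)
    (h1 : 0 < M i j) (h2 : 0 < M j k) (h3 : 0 < M k i)
    (hw : 4 * Wt M i j < Wt M j k * Wt M k i) :
    0 < mutate M k i k ∧ 0 < mutate M k k j ∧ 0 < mutate M k j i ∧
    Wt (mutate M k) i k = Wt M k i ∧ Wt (mutate M k) k j = Wt M j k ∧
    Wt M i j < Wt (mutate M k) j i := by
  have hji : M j i < 0 := skew_neg_of_pos hd h h1
  have hkj : M k j < 0 := skew_neg_of_pos hd h h2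
  have hik' : M i k < 0 := skew_neg_of_pos hd h h3
  have e_ji : mutate M k j i = M j i + M j k * M k i := by
    rw [mutate_apply_ne M hjk hik, half_pp h2 h3]
  have e_ij : mutate M k i j = M i j + -(M i k * M k j) := by
    rw [mutate_apply_ne M hik hjk, half_nn hik' hkj]
  -- s-identity
  have hD : (0:ℤ) < d i * (d j * d k) := by
    have := hd i; have := hd j; have := hd k; positivity
  have hS : M i j * M k i * M j k = -M j i * -M i k * -M k j := by
    refine mul_left_cancel₀ hD.ne' ?_
    linear_combination (M k i * d i * (M j k * d k)) * h i j
      + ((-(M j i * d i)) * (M j k * d k)) * h k i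
      + ((-(M j i * d i)) * (-(M i k * d k))) * h j k
  rw [Wt_pos_neg h1 hji, Wt_pos_neg h2 hkj, Wt_pos_neg h3 hik'] at hw
  obtain ⟨g1, g2, g3⟩ := key_arith h1 (neg_pos.mpr hji) h3 (neg_pos.mpr hik') h2
    (neg_pos.mpr hkj) hS hw
  have pji : 0 < mutate M k j i := by rw [e_ji]; linarith
  have pij : mutate M k i j < 0 := by rw [e_ij]; linarith
  refine ⟨?_, ?_, pji, ?_, ?_, ?_⟩
  · rw [mutate_apply_right]; exact neg_pos.mpr hik'
  · rw [mutate_apply_left]; exact neg_pos.mpr hkj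
  · unfold Wt
    rw [mutate_apply_right, mutate_apply_left, neg_mul_neg, mul_comm]
  · unfold Wt
    rw [mutate_apply_left, mutate_apply_right, neg_mul_neg, mul_comm]
  · have w2 : Wt (mutate M k) j i = -(mutate M k j i * mutate M k i j) :=
      abs_of_nonpos (mul_nonpos_iff.mpr (Or.inl ⟨pji.le, pij.le⟩))
    rw [Wt_pos_neg h1 hji, w2, e_ji, e_ij]
    nlinarith [g3]

end Core

section Init

variable {n : ℕ} {d : Fin n → ℤ} {B M : Matrix (Fin n) (Fin n) ℤ}

def Props (B M : Matrix (Fin n) (Fin n) ℤ) (i j k : Fin n) : Prop :=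
  M ∈ mutationClass B ∧ i ≠ j ∧ j ≠ k ∧ i ≠ k ∧ 0 < M i j ∧ 0 < M j k ∧ 0 < M k i ∧
    (5 ≤ Wt M i j ∨ 5 ≤ Wt M j k ∨ 5 ≤ Wt M k i)

lemma core_pos_props (hd : ∀ i, 0 < d i) (hskw : Skew d M) (hM : M ∈ mutationClass B)
    {a b c : Fin n} (hab : a ≠ b) (hbc : b ≠ c) (hac : a ≠ c)
    (h1 : 0 < M a b) (h2 : 0 < M b c) (h3 : 0 ≤ M a c)
    (hbig : 5 ≤ Wt M a b ∨ 5 ≤ Wt M b c ∨ 5 ≤ Wt M a c) :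
    ∃ M' a' b' c', Props B M' a' b' c' := by
  obtain ⟨g1, g2, g3, w1, w2, w3, _⟩ := core_pos hd hskw hab hbc hac h1 h2 h3
  refine ⟨mutate M b, a, c, b, mem_mutate hM b, hac, hbc.symm, hab, g1, g2, g3, ?_⟩
  rcases hbig with h5 | h5 | h5
  · exact Or.inr (Or.inr (w1 ▸ h5))
  · exact Or.inr (Or.inl (w2 ▸ h5))
  · exact Or.inl (le_trans h5 w3)

lemma init (hd : ∀ i, 0 < d i) (hskw : Skew d M) (hM : M ∈ mutationClass B)
    {i j k : Fin n} (hij : i ≠ j) (hik : i ≠ k) (hjk : j ≠ k)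
    (hbig : 5 ≤ Wt M i j) (hadj : M i k ≠ 0 ∨ M j k ≠ 0) :
    ∃ M' a b c, Props B M' a b c := by
  have hijne : M i j ≠ 0 := by
    intro h0; rw [Wt, h0, zero_mul, abs_zero] at hbig; linarith
  by_cases hv0 : M i k = 0
  · -- branch B : only edge (j,k) besides (i,j)
    have hki0 : M k i = 0 := skew_zero hd hskw hv0
    have hw0 : M j k ≠ 0 := by
      rcases hadj with h | h
      · exact absurd hv0 h
      · exact h
    rcases lt_trichotomy (M i j) 0 with hu | hu | hu
    · -- u < 0
      have hji : 0 < M j i := skew_pos_of_neg hd hskw hu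
      rcases lt_trichotomy (M j k) 0 with hw | hw | hw
      · -- u<0, w<0 : tuple (k,j,i)
        have hkj : 0 < M k j := skew_pos_of_neg hd hskw hw
        exact core_pos_props hd hskw hM hjk.symm hij.symm hik.symm hkj hji
          (le_of_eq hki0.symm) (Or.inr (Or.inl ((Wt_symm M i j) ▸ hbig)))
      · exact absurd hw hw0
      · -- u<0, w>0 : flip at i then tuple (i,j,k)
        set M1 := mutate M i with hM1
        have f_ij : M1 i j = -M i j := mutate_apply_left M i j
        have f_ji : M1 j i = -M j i := mutate_apply_right M i j
        have f_jk : M1 j k = M j k := by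
          rw [hM1, mutate_apply_ne M hij.symm hik.symm, hv0]; simp
        have f_ik : M1 i k = -M i k := mutate_apply_left M i k
        have hskw1 : Skew d M1 := skew_mutate hd hskw i
        have hbig1 : 5 ≤ Wt M1 i j := by
          rw [Wt, f_ij, f_ji, neg_mul_neg]; exact hbig
        exact core_pos_props hd hskw1 (mem_mutate hM i) hij hjk hik
          (by rw [f_ij]; linarith) (by rw [f_jk]; exact hw)
          (by rw [f_ik, hv0]; simp) (Or.inl hbig1)
    · exact absurd hu hijne
    · -- u > 0
      have hji : M j i < 0 := skew_neg_of_pos hd hskw hu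
      rcases lt_trichotomy (M j k) 0 with hw | hw | hw
      · -- u>0, w<0 : flip at i then tuple (k,j,i)
        have hkj : 0 < M k j := skew_pos_of_neg hd hskw hw
        set M1 := mutate M i with hM1
        have f_ij : M1 i j = -M i j := mutate_apply_left M i j
        have f_ji : M1 j i = -M j i := mutate_apply_right M i j
        have f_kj : M1 k j = M k j := by
          rw [hM1, mutate_apply_ne M hik.symm hij.symm, hki0]; simp
        have f_ki : M1 k i = -M k i := mutate_apply_right M i k
        have hskw1 : Skew d M1 := skew_mutate hd hskw i
        have hbig1 : 5 ≤ Wt M1 j i := by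
          rw [Wt, f_ij, f_ji]; rw [Wt] at hbig
          rw [show -M j i * -M i j = M i j * M j i by ring]; exact hbig
        exact core_pos_props hd hskw1 (mem_mutate hM i) hjk.symm hij.symm hik.symm
          (by rw [f_kj]; exact hkj) (by rw [f_ji]; linarith)
          (by rw [f_ki, hki0]; simp) (Or.inr (Or.inl hbig1))
      · exact absurd hw hw0
      · -- u>0, w>0 : tuple (i,j,k)
        exact core_pos_props hd hskw hM hij hjk hik hu hw
          (le_of_eq hv0.symm) (Or.inl hbig)
  · -- branch A : edge (i,k) present
    rcases lt_trichotomy (M i j) 0 with hu | hu | hu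
    · -- u < 0
      have hji : 0 < M j i := skew_pos_of_neg hd hskw hu
      rcases lt_trichotomy (M i k) 0 with hv | hv | hv
      · -- u<0, v<0
        have hki : 0 < M k i := skew_pos_of_neg hd hskw hv
        rcases lt_trichotomy (M j k) 0 with hw | hw | hw
        · -- u<0, v<0, w<0 : tuple (k,j,i)
          have hkj : 0 < M k j := skew_pos_of_neg hd hskw hw
          exact core_pos_props hd hskw hM hjk.symm hij.symm hik.symm hkj hji hki.le
            (Or.inr (Or.inl ((Wt_symm M i j) ▸ hbig)))
        · -- u<0, v<0, w=0 : flip at j then tuple (k,i,j)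
          have hkj0 : M k j = 0 := skew_zero hd hskw hw
          set M1 := mutate M j with hM1
          have f_ij : M1 i j = -M i j := mutate_apply_right M j i
          have f_ji : M1 j i = -M j i := mutate_apply_left M j i
          have f_ki : M1 k i = M k i := by
            rw [hM1, mutate_apply_ne M hjk.symm hij, hkj0]; simp
          have f_kj : M1 k j = -M k j := mutate_apply_right M j k
          have hskw1 : Skew d M1 := skew_mutate hd hskw j
          have hbig1 : 5 ≤ Wt M1 i j := by
            rw [Wt, f_ij, f_ji, neg_mul_neg]; exact hbig
          exact core_pos_props hd hskw1 (mem_mutate hM j) hik.symm hij hjk.symm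
            (by rw [f_ki]; exact hki) (by rw [f_ij]; linarith)
            (by rw [f_kj, hkj0]; simp) (Or.inr (Or.inl hbig1))
        · -- u<0, v<0, w>0 : tuple (j,k,i)
          exact core_pos_props hd hskw hM hjk hik.symm hij.symm hw hki hji.le
            (Or.inr (Or.inr ((Wt_symm M i j) ▸ hbig)))
      · exact absurd hv hv0
      · -- u<0, v>0
        rcases lt_trichotomy (M j k) 0 with hw | hw | hw
        · -- u<0, v>0, w<0 : ready cyclic (j,i,k)
          have hkj : 0 < M k j := skew_pos_of_neg hd hskw hw
          exact ⟨M, j, i, k, hM, hij.symm, hik, hjk, hji, hv, hkj,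
            Or.inl ((Wt_symm M i j) ▸ hbig)⟩
        · -- u<0, v>0, w=0 : tuple (j,i,k)
          exact core_pos_props hd hskw hM hij.symm hik hjk hji hv (le_of_eq hw.symm)
            (Or.inl ((Wt_symm M i j) ▸ hbig))
        · -- u<0, v>0, w>0 : tuple (j,i,k)
          exact core_pos_props hd hskw hM hij.symm hik hjk hji hv hw.le
            (Or.inl ((Wt_symm M i j) ▸ hbig))
    · exact absurd hu hijne
    · -- u > 0
      have hji : M j i < 0 := skew_neg_of_pos hd hskw hu
      rcases lt_trichotomy (M i k) 0 with hv | hv | hv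
      · -- u>0, v<0
        have hki : 0 < M k i := skew_pos_of_neg hd hskw hv
        rcases lt_trichotomy (M j k) 0 with hw | hw | hw
        · -- u>0, v<0, w<0 : tuple (k,i,j)
          have hkj : 0 < M k j := skew_pos_of_neg hd hskw hw
          exact core_pos_props hd hskw hM hik.symm hij hjk.symm hki hu hkj.le
            (Or.inr (Or.inl hbig))
        · -- u>0, v<0, w=0 : tuple (k,i,j)
          have hkj0 : M k j = 0 := skew_zero hd hskw hw
          exact core_pos_props hd hskw hM hik.symm hij hjk.symm hki hu
            (le_of_eq hkj0.symm) (Or.inr (Or.inl hbig))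
        · -- u>0, v<0, w>0 : ready cyclic (i,j,k)
          exact ⟨M, i, j, k, hM, hij, hjk, hik, hu, hw, hki, Or.inl hbig⟩
      · exact absurd hv hv0
      · -- u>0, v>0
        rcases lt_trichotomy (M j k) 0 with hw | hw | hw
        · -- u>0, v>0, w<0 : tuple (i,k,j)
          have hkj : 0 < M k j := skew_pos_of_neg hd hskw hw
          exact core_pos_props hd hskw hM hik hjk.symm hij hv hkj hu.le
            (Or.inr (Or.inr hbig))
        · -- u>0, v>0, w=0 : flip at j then tuple (j,i,k)
          have hkj0 : M k j = 0 := skew_zero hd hskw hw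
          set M1 := mutate M j with hM1
          have f_ij : M1 i j = -M i j := mutate_apply_right M j i
          have f_ji : M1 j i = -M j i := mutate_apply_left M j i
          have f_ik : M1 i k = M i k := by
            rw [hM1, mutate_apply_ne M hij hjk.symm, hw]; simp
          have f_jk : M1 j k = -M j k := mutate_apply_left M j k
          have hskw1 : Skew d M1 := skew_mutate hd hskw j
          have hbig1 : 5 ≤ Wt M1 j i := by
            rw [Wt, f_ij, f_ji]; rw [Wt] at hbig
            rw [show -M j i * -M i j = M i j * M j i by ring]; exact hbig
          exact core_pos_props hd hskw1 (mem_mutate hM j) hij.symm hik hjk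
            (by rw [f_ji]; linarith) (by rw [f_ik]; exact hv)
            (by rw [f_jk, hw]; simp) (Or.inl hbig1)
        · -- u>0, v>0, w>0 : tuple (i,j,k)
          exact core_pos_props hd hskw hM hij hjk hik hu hw hv.le (Or.inl hbig)

end Init

section Grow

variable {n : ℕ} {d : Fin n → ℤ} {B : Matrix (Fin n) (Fin n) ℤ}

lemma grow (hd : ∀ i, 0 < d i) (hBskew : Skew d B) {M : Matrix (Fin n) (Fin n) ℤ}
    {i j k : Fin n} (hP : Props B M i j k) :
    ∃ M' a b c, Props B M' a b c ∧
      Wt M i j + Wt M j k + Wt M k i + 1 ≤ Wt M' a b + Wt M' b c + Wt M' c a := by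
  obtain ⟨hM, hij, hjk, hik, c1, c2, c3, hmax⟩ := hP
  have hskw := class_skew hd hBskew hM
  have hji := skew_neg_of_pos hd hskw c1
  have hkj := skew_neg_of_pos hd hskw c2
  have hik' := skew_neg_of_pos hd hskw c3
  have oZ : 1 ≤ Wt M i j := one_le_Wt c1 hji
  have oX : 1 ≤ Wt M j k := one_le_Wt c2 hkj
  have oY : 1 ≤ Wt M k i := one_le_Wt c3 hik'
  by_cases hA : Wt M i j ≤ Wt M j k ∧ Wt M i j ≤ Wt M k i
  · have hw : 4 * Wt M i j < Wt M j k * Wt M k i := minmax oZ oX oY hA.1 hA.2 hmax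
    obtain ⟨g1, g2, g3, w1, w2, w3⟩ := core_neg hd hskw hij hjk hik c1 c2 c3 hw
    refine ⟨mutate M k, i, k, j, ⟨mem_mutate hM k, hik, hjk.symm, hij, g1, g2, g3, ?_⟩, ?_⟩
    · rcases hmax with h5 | h5 | h5
      · exact Or.inr (Or.inr (le_trans h5 w3.le))
      · exact Or.inr (Or.inl (w2 ▸ h5))
      · exact Or.inl (w1 ▸ h5)
    · rw [w1, w2]; linarith
  · by_cases hB2 : Wt M j k ≤ Wt M k i
    · have hXZ : Wt M j k ≤ Wt M i j := by
        by_contra hc; push_neg at hc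
        exact hA ⟨hc.le, le_trans hc.le hB2⟩
      have hw : 4 * Wt M j k < Wt M k i * Wt M i j :=
        minmax oX oY oZ hB2 hXZ (by tauto)
      obtain ⟨g1, g2, g3, w1, w2, w3⟩ :=
        core_neg hd hskw hjk hik.symm hij.symm c2 c3 c1 hw
      refine ⟨mutate M i, j, i, k, ⟨mem_mutate hM i, hij.symm, hik, hjk, g1, g2, g3, ?_⟩, ?_⟩
      · rcases hmax with h5 | h5 | h5
        · exact Or.inl (w1 ▸ h5)
        · exact Or.inr (Or.inr (le_trans h5 w3.le))
        · exact Or.inr (Or.inl (w2 ▸ h5))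
      · rw [w1, w2]; linarith
    · push_neg at hB2
      have hYZ : Wt M k i ≤ Wt M i j := by
        by_contra hc; push_neg at hc
        exact hA ⟨le_trans hc.le hB2.le, hc.le⟩
      have hw : 4 * Wt M k i < Wt M i j * Wt M j k :=
        minmax oY oZ oX hYZ hB2.le (by tauto)
      obtain ⟨g1, g2, g3, w1, w2, w3⟩ :=
        core_neg hd hskw hik.symm hij hjk.symm c3 c1 c2 hw
      refine ⟨mutate M j, k, j, i, ⟨mem_mutate hM j, hjk.symm, hij.symm, hik.symm, g1, g2, g3, ?_⟩, ?_⟩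
      · rcases hmax with h5 | h5 | h5
        · exact Or.inr (Or.inl (w2 ▸ h5))
        · exact Or.inl (w1 ▸ h5)
        · exact Or.inr (Or.inr (le_trans h5 w3.le))
      · rw [w1, w2]; linarith

lemma escalate (hd : ∀ i, 0 < d i) (hBskew : Skew d B) {M0 : Matrix (Fin n) (Fin n) ℤ}
    {i0 j0 k0 : Fin n} (h0 : Props B M0 i0 j0 k0) :
    ∀ N : ℕ, ∃ M i j k, Props B M i j k ∧
      Wt M0 i0 j0 + Wt M0 j0 k0 + Wt M0 k0 i0 + N ≤ Wt M i j + Wt M j k + Wt M k i := by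
  intro N
  induction N with
  | zero => exact ⟨M0, i0, j0, k0, h0, by simp⟩
  | succ N ih =>
    obtain ⟨M, i, j, k, hP, hle⟩ := ih
    obtain ⟨M', a, b, c, hP', hlt⟩ := grow hd hBskew hP
    refine ⟨M', a, b, c, hP', ?_⟩
    push_cast
    push_cast at hle
    linarith

end Grow

section Neighbor

variable {n : ℕ}

lemma exists_third (hn : 3 ≤ n) (i j : Fin n) : ∃ m : Fin n, m ≠ i ∧ m ≠ j := by
  by_contra hc
  push_neg at hc
  have hsub : (Finset.univ : Finset (Fin n)) ⊆ {i, j} := by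
    intro m _
    simp only [Finset.mem_insert, Finset.mem_singleton]
    by_cases h : m = i
    · exact Or.inl h
    · exact Or.inr (hc m h)
  have h1 := Finset.card_le_card hsub
  have h2 : ({i, j} : Finset (Fin n)).card ≤ 2 := by
    apply le_trans (Finset.card_insert_le _ _); simp
  simp only [Finset.card_univ, Fintype.card_fin] at h1
  omega

lemma find_nb {G : SimpleGraph (Fin n)} {i j v : Fin n} (w : G.Walk v i) :
    v ≠ i → v ≠ j → ∃ k, k ≠ i ∧ k ≠ j ∧ (G.Adj k i ∨ G.Adj k j) := by
  induction w with
  | nil => intro h _; exact absurd rfl h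
  | @cons a b e hadj p ih =>
    intro hvi hvj
    by_cases hbi : b = e
    · exact ⟨a, hvi, hvj, Or.inl (hbi ▸ hadj)⟩
    · by_cases hbj : b = j
      · exact ⟨a, hvi, hvj, Or.inr (hbj ▸ hadj)⟩
      · exact ih hbi hbj

lemma exists_neighbor {M : Matrix (Fin n) (Fin n) ℤ} (hc : (Dg M).Connected) (hn : 3 ≤ n)
    {i j : Fin n} (hij : i ≠ j) :
    ∃ k, k ≠ i ∧ k ≠ j ∧ ((M i k ≠ 0 ∨ M k i ≠ 0) ∨ (M j k ≠ 0 ∨ M k j ≠ 0)) := by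
  obtain ⟨m, hmi, hmj⟩ := exists_third hn i j
  obtain ⟨w⟩ := hc.preconnected m i
  obtain ⟨k, hki, hkj, hor⟩ := find_nb w hmi hmj
  refine ⟨k, hki, hkj, ?_⟩
  rcases hor with h | h
  · rw [Dg_adj] at h
    exact Or.inl (h.2.symm.imp id id)
  · rw [Dg_adj] at h
    exact Or.inr (h.2.symm.imp id id)

lemma three_le_total {M : Matrix (Fin n) (Fin n) ℤ} {a b c : Fin n}
    (hab : a ≠ b) (hbc : b ≠ c) (hac : a ≠ c) :
    Wt M a b + Wt M b c + Wt M c a ≤ ∑ p : Fin n × Fin n, |M p.1 p.2 * M p.2 p.1| := by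
  classical
  have hins : (({(a,b), (b,c), (c,a)} : Finset (Fin n × Fin n)).sum
      fun p => |M p.1 p.2 * M p.2 p.1|) = Wt M a b + Wt M b c + Wt M c a := by
    rw [Finset.sum_insert (by simp [Prod.ext_iff, hab, hac]),
      Finset.sum_insert (by simp [Prod.ext_iff, hbc]), Finset.sum_singleton]
    simp only [Wt]
    ring
  rw [← hins]
  exact Finset.sum_le_sum_of_subset_of_nonneg (Finset.subset_univ _)
    (fun _ _ _ => abs_nonneg _)

end Neighbor

end MutAux

/-- A connected skew-symmetrizable matrix of order at least `3` is mutation-finite iff no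
matrix in its mutation class has an entry pair of weight `|b'_ij * b'_ji|` greater than `4`. -/
theorem mutationFinite_iff_weights_le_four {n : ℕ} (hn : 3 ≤ n)
    (B : Matrix (Fin n) (Fin n) ℤ) (hB : IsSkewSymmetrizable B)
    (hconn : (SimpleGraph.fromRel (fun i j => B i j ≠ 0)).Connected) :
    (mutationClass B).Finite ↔
      ∀ B' ∈ mutationClass B, ∀ i j, |B' i j * B' j i| ≤ 4 := by
  obtain ⟨d, hd, hskewB'⟩ := hB
  have hskewB : MutAux.Skew d B := hskewB'
  constructor
  · -- finite → all weights ≤ 4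
    intro hfin B' hB' i j
    by_contra hgt
    push_neg at hgt
    have hskw' : MutAux.Skew d B' := MutAux.class_skew hd hskewB hB'
    have hij : i ≠ j := by
      rintro rfl
      rw [MutAux.skew_diag hd hskw' i] at hgt
      simp at hgt
    have hbig : 5 ≤ MutAux.Wt B' i j := by
      have h5 := Int.add_one_le_iff.mpr hgt
      norm_num at h5
      unfold MutAux.Wt; rw [abs_mul]; exact h5
    have hconn' : (MutAux.Dg B').Connected :=
      MutAux.class_conn (show (MutAux.Dg B).Connected from hconn) hB'
    obtain ⟨k, hki, hkj, hor⟩ := MutAux.exists_neighbor hconn' hn hij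
    have hadj : B' i k ≠ 0 ∨ B' j k ≠ 0 := by
      rcases hor with (h | h) | (h | h)
      · exact Or.inl h
      · exact Or.inl fun hz => h (MutAux.skew_zero hd hskw' hz)
      · exact Or.inr h
      · exact Or.inr fun hz => h (MutAux.skew_zero hd hskw' hz)
    obtain ⟨M0, a0, b0, c0, h0⟩ :=
      MutAux.init hd hskw' hB' hij (Ne.symm hki) (Ne.symm hkj) hbig hadj
    obtain ⟨C, hC⟩ := (hfin.image
      (fun M : Matrix (Fin n) (Fin n) ℤ => ∑ p : Fin n × Fin n, |M p.1 p.2 * M p.2 p.1|)).bddAbove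
    obtain ⟨M, a, b, c, hP, hle⟩ :=
      MutAux.escalate hd hskewB h0
        (C + 1 - (MutAux.Wt M0 a0 b0 + MutAux.Wt M0 b0 c0 + MutAux.Wt M0 c0 a0)).toNat
    have h1 : (∑ p : Fin n × Fin n, |M p.1 p.2 * M p.2 p.1|) ≤ C :=
      hC (Set.mem_image_of_mem _ hP.1)
    have h3 : MutAux.Wt M a b + MutAux.Wt M b c + MutAux.Wt M c a
        ≤ ∑ p : Fin n × Fin n, |M p.1 p.2 * M p.2 p.1| :=
      MutAux.three_le_total hP.2.1 hP.2.2.1 hP.2.2.2.1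
    have h4 := Int.self_le_toNat
      (C + 1 - (MutAux.Wt M0 a0 b0 + MutAux.Wt M0 b0 c0 + MutAux.Wt M0 c0 a0))
    linarith
  · -- all weights ≤ 4 → finite
    intro h
    have key : ∀ M ∈ mutationClass B, ∀ a b, M a b ∈ Set.Icc (-4 : ℤ) 4 := by
      intro M hM a b
      have hskw := MutAux.class_skew hd hskewB hM
      have habs : |M a b| ≤ 4 := by
        by_cases hz : M b a = 0
        · rw [MutAux.skew_zero hd hskw hz]
          norm_num
        · have h1 : 1 ≤ |M b a| := Int.one_le_abs hz
          have h2 := h M hM a b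
          rw [abs_mul] at h2
          nlinarith [abs_nonneg (M a b)]
      rw [Set.mem_Icc]
      exact abs_le.mp habs
    have hfin : (Set.pi (Set.univ : Set (Fin n))
        fun _ => Set.pi (Set.univ : Set (Fin n)) fun _ => Set.Icc (-4 : ℤ) 4).Finite :=
      Set.Finite.pi fun _ => Set.Finite.pi fun _ => Set.finite_Icc _ _
    refine Set.Finite.subset hfin ?_
    intro M hM
    rw [Set.mem_univ_pi]
    intro a
    rw [Set.mem_univ_pi]
    intro b
    exact key M hM a b
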